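/- Let β : [0,∞) → ℝ be nonnegative, continuously differentiable with compact support, β(0) = 0, and with β ∈ L¹ and β' ∈ L². Then there is a universal constant C > 0 such that ∫₀^∞ β(x)² dx ≤ C (∫₀^∞ β'(x)² dx)^{3/5} (∫₀^∞ x β(x) dx)^{4/5}. -/

import Mathlib

open MeasureTheory Set

set_option maxHeartbeats 1000000 in
theorem nash_inequality_halfline :
    ∃ C : ℝ, 0 < C ∧
      ∀ β : ℝ → ℝ, ContDiff ℝ 1 β → HasCompactSupport β → β 0 = 0 →
        (∀ x, 0 ≤ x → 0 ≤ β x) →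
        IntegrableOn β (Ioi (0 : ℝ)) →
        IntegrableOn (fun x => (deriv β x) ^ 2) (Ioi (0 : ℝ)) →
        (∫ x in Ioi (0 : ℝ), (β x) ^ 2) ≤
          C * (∫ x in Ioi (0 : ℝ), (deriv β x) ^ 2) ^ ((3 : ℝ) / 5) *
            (∫ x in Ioi (0 : ℝ), x * β x) ^ ((4 : ℝ) / 5) := by
  refine ⟨8, by norm_num, fun β hβ hsupp hβ0 hnn hint hint' => ?_⟩
  set D : ℝ := ∫ x in Ioi (0 : ℝ), (deriv β x) ^ 2 with hD
  set E : ℝ := ∫ x in Ioi (0 : ℝ), (β x) ^ 2 with hE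
  set F : ℝ := ∫ x in Ioi (0 : ℝ), x * β x with hF
  have hβc : Continuous β := hβ.continuous
  have hβ'c : Continuous (deriv β) := (hβ.iterate_deriv' 0 1).continuous
  -- nonnegativity of the three integrals
  have hD0 : 0 ≤ D := setIntegral_nonneg measurableSet_Ioi (fun x _ => sq_nonneg _)
  have hE0 : 0 ≤ E := setIntegral_nonneg measurableSet_Ioi (fun x _ => sq_nonneg _)
  have hF0 : 0 ≤ F := setIntegral_nonneg measurableSet_Ioi
    (fun x hx => mul_nonneg (le_of_lt hx) (hnn x (le_of_lt hx)))
  -- RHS nonneg, dispatch trivial case E = 0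
  have hRHSnn : 0 ≤ 8 * D ^ ((3:ℝ)/5) * F ^ ((4:ℝ)/5) := by positivity
  rcases eq_or_lt_of_le hE0 with hE' | hE'
  · linarith [hE'.symm]
  -- integrability facts
  have hβ2c : Continuous (fun x => (β x)^2) := hβc.pow 2
  have hβ2supp : HasCompactSupport (fun x => (β x)^2) :=
    hsupp.comp_left (g := fun y => y^2) (by norm_num)
  have hβ2int : IntegrableOn (fun x => (β x)^2) (Ioi (0:ℝ)) :=
    (hβ2c.integrable_of_hasCompactSupport hβ2supp).integrableOn
  have hxβc : Continuous (fun x => x * β x) := continuous_id.mul hβc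
  have hxβsupp : HasCompactSupport (fun x => x * β x) := hsupp.mul_left
  have hxβint : IntegrableOn (fun x => x * β x) (Ioi (0:ℝ)) :=
    (hxβc.integrable_of_hasCompactSupport hxβsupp).integrableOn
  -- Cauchy-Schwarz
  have hmem2 : MemLp β (ENNReal.ofReal 2) (volume.restrict (Ioi (0:ℝ))) := by
    exact (hβc.memLp_of_hasCompactSupport (μ := volume) (p := ENNReal.ofReal 2) hsupp).restrict _
  have hmem2' : MemLp (deriv β) (ENNReal.ofReal 2) (volume.restrict (Ioi (0:ℝ))) := by
    exact (hβ'c.memLp_of_hasCompactSupport (μ := volume) (p := ENNReal.ofReal 2) hsupp.deriv).restrict _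
  have hconj : Real.HolderConjugate 2 2 := Real.HolderConjugate.two_two
  have hCS : (∫ x in Ioi (0:ℝ), |β x| * |deriv β x|) ≤ Real.sqrt E * Real.sqrt D := by
    have h := integral_mul_norm_le_Lp_mul_Lq (μ := volume.restrict (Ioi (0:ℝ))) hconj hmem2 hmem2'
    have e1 : (∫ x in Ioi (0:ℝ), ‖β x‖ ^ (2:ℝ)) = E := by
      rw [hE]
      refine setIntegral_congr_fun measurableSet_Ioi (fun x _ => ?_)
      rw [show ((2:ℝ)) = ((2:ℕ):ℝ) by norm_num, Real.rpow_natCast]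
      simp [sq_abs]
    have e2 : (∫ x in Ioi (0:ℝ), ‖deriv β x‖ ^ (2:ℝ)) = D := by
      rw [hD]
      refine setIntegral_congr_fun measurableSet_Ioi (fun x _ => ?_)
      rw [show ((2:ℝ)) = ((2:ℕ):ℝ) by norm_num, Real.rpow_natCast]
      simp [sq_abs]
    rw [e1, e2] at h
    rw [Real.sqrt_eq_rpow, Real.sqrt_eq_rpow]
    simpa [Real.norm_eq_abs] using h
  -- pointwise sup bound
  set M : ℝ := Real.sqrt (2 * (Real.sqrt E * Real.sqrt D)) with hM
  have hM0 : 0 ≤ M := Real.sqrt_nonneg _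
  have hMsq : M^2 = 2 * (Real.sqrt E * Real.sqrt D) :=
    Real.sq_sqrt (by positivity)
  have hsup : ∀ x : ℝ, 0 ≤ x → (β x)^2 ≤ M^2 := by
    intro x hx
    rw [hMsq]
    rcases eq_or_lt_of_le hx with hx0 | hx0
    · rw [← hx0, hβ0]; norm_num; positivity
    -- FTC on [0, x]
    have hder : ∀ t ∈ uIcc (0:ℝ) x, HasDerivAt (fun y => (β y)^2) (2 * β t * deriv β t) t := by
      intro t _
      have h := ((hβ.differentiable one_ne_zero) t).hasDerivAt
      have := h.fun_pow 2
      simpa [mul_comm, mul_assoc, mul_left_comm] using this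
    have hcont2 : Continuous (fun t => 2 * β t * deriv β t) :=
      (continuous_const.mul hβc).mul hβ'c
    have hII : IntervalIntegrable (fun t => 2 * β t * deriv β t) volume 0 x :=
      hcont2.intervalIntegrable _ _
    have hFTC := intervalIntegral.integral_eq_sub_of_hasDerivAt
      (f := fun y => (β y)^2) (f' := fun t => 2 * β t * deriv β t)
      (fun t ht => hder t ht) hII
    have habs : Continuous (fun t => 2 * (|β t| * |deriv β t|)) :=
      continuous_const.mul (hβc.abs.mul hβ'c.abs)
    have habsint : IntegrableOn (fun t => 2 * (|β t| * |deriv β t|)) (Ioi (0:ℝ)) := by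
      refine (habs.integrable_of_hasCompactSupport ?_).integrableOn
      exact ((hsupp.abs.mul_right)).mul_left
    have h1 : (β x)^2 = ∫ t in Ioc (0:ℝ) x, 2 * β t * deriv β t := by
      rw [← intervalIntegral.integral_of_le hx, hFTC]; simp [hβ0]
    have h2 : (∫ t in Ioc (0:ℝ) x, 2 * β t * deriv β t)
        ≤ ∫ t in Ioc (0:ℝ) x, 2 * (|β t| * |deriv β t|) := by
      refine setIntegral_mono_on (hII.1.mono_set (by simp [uIoc_of_le hx])) 
        (habsint.mono_set (Ioc_subset_Ioi_self)) measurableSet_Ioc (fun t _ => ?_)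
      have := abs_mul (β t) (deriv β t)
      calc 2 * β t * deriv β t ≤ 2 * |β t * deriv β t| := by
            rw [mul_assoc]; exact mul_le_mul_of_nonneg_left (le_abs_self _) (by norm_num)
        _ = 2 * (|β t| * |deriv β t|) := by rw [abs_mul]
    have h3 : (∫ t in Ioc (0:ℝ) x, 2 * (|β t| * |deriv β t|))
        ≤ ∫ t in Ioi (0:ℝ), 2 * (|β t| * |deriv β t|) := by
      refine setIntegral_mono_set habsint ?_ (HasSubset.Subset.eventuallyLE Ioc_subset_Ioi_self)
      filter_upwards with t
      positivity
    have h4 : (∫ t in Ioi (0:ℝ), 2 * (|β t| * |deriv β t|)) 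
        = 2 * ∫ t in Ioi (0:ℝ), |β t| * |deriv β t| := by
      rw [integral_const_mul]
    nlinarith [hCS]
  have hβleM : ∀ x : ℝ, 0 ≤ x → β x ≤ M := by
    intro x hx
    have h := hsup x hx
    nlinarith [hnn x hx]
  -- main splitting inequality
  have key : ∀ r : ℝ, 0 < r → E ≤ r * M^2 + M * F / r := by
    intro r hr
    have hsplit : E = (∫ x in Ioc (0:ℝ) r, (β x)^2) + ∫ x in Ioi r, (β x)^2 := by
      rw [hE, ← Ioc_union_Ioi_eq_Ioi hr.le, setIntegral_union 
        (Ioc_disjoint_Ioi le_rfl) measurableSet_Ioi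
        (hβ2int.mono_set Ioc_subset_Ioi_self) (hβ2int.mono_set (Ioi_subset_Ioi hr.le))]
    have hb1 : (∫ x in Ioc (0:ℝ) r, (β x)^2) ≤ r * M^2 := by
      calc (∫ x in Ioc (0:ℝ) r, (β x)^2) ≤ ∫ _x in Ioc (0:ℝ) r, M^2 := by
            refine setIntegral_mono_on (hβ2int.mono_set Ioc_subset_Ioi_self)
              (integrableOn_const (by simp)) measurableSet_Ioc (fun x hx => ?_)
            exact hsup x hx.1.le
        _ = r * M^2 := by
            rw [setIntegral_const, Real.volume_real_Ioc_of_le hr.le, smul_eq_mul]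
            ring
    have hb2 : (∫ x in Ioi r, (β x)^2) ≤ M * F / r := by
      have hp : ∀ x ∈ Ioi r, (β x)^2 ≤ (M / r) * (x * β x) := by
        intro x hx
        have hxr : r < x := hx
        have hb := hnn x (le_trans hr.le hxr.le)
        have hbM := hβleM x (le_trans hr.le hxr.le)
        have h1 : (β x)^2 ≤ M * β x := by nlinarith
        have h2 : M * β x ≤ (M / r) * (x * β x) := by
          rw [div_mul_eq_mul_div, le_div_iff₀ hr]
          nlinarith
        linarith
      calc (∫ x in Ioi r, (β x)^2) ≤ ∫ x in Ioi r, (M / r) * (x * β x) := by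
            refine setIntegral_mono_on (hβ2int.mono_set (Ioi_subset_Ioi hr.le))
              ((hxβint.mono_set (Ioi_subset_Ioi hr.le)).const_mul _) measurableSet_Ioi hp
        _ = (M / r) * ∫ x in Ioi r, x * β x := by rw [integral_const_mul]
        _ ≤ (M / r) * F := by
            refine mul_le_mul_of_nonneg_left ?_ (by positivity)
            rw [hF]
            refine setIntegral_mono_set hxβint ?_ 
              (HasSubset.Subset.eventuallyLE (Ioi_subset_Ioi hr.le))
            filter_upwards [ae_restrict_mem measurableSet_Ioi] with t ht
            exact mul_nonneg (le_of_lt ht) (hnn t (le_of_lt ht))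
        _ = M * F / r := by ring
    linarith [hsplit, hb1, hb2]
  -- positivity of M, D, F
  have hMpos : 0 < M := by
    rcases eq_or_lt_of_le hM0 with h | h
    · exfalso
      have := key 1 one_pos
      rw [← h] at this
      simp at this
      linarith
    · exact h
  have hDpos : 0 < D := by
    by_contra hD'
    push_neg at hD'
    have : D = 0 := le_antisymm hD' hD0
    rw [this, Real.sqrt_zero, mul_zero, mul_zero, Real.sqrt_zero] at hM
    rw [hM] at hMpos
    exact lt_irrefl _ hMpos
  have hFpos : 0 < F := by
    by_contra hF'
    push_neg at hF'
    have hF'' : F = 0 := le_antisymm hF' hF0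
    have hr : (0:ℝ) < E / (2 * M^2) := by positivity
    have h := key _ hr
    rw [hF''] at h
    simp only [mul_zero, zero_div, add_zero] at h
    have heq : E / (2 * M^2) * M^2 = E / 2 := by
      field_simp
    rw [heq] at h
    linarith
  -- optimization: r = sqrt (F / M)
  set r : ℝ := Real.sqrt (F / M) with hrdef
  have hrpos : 0 < r := Real.sqrt_pos.mpr (by positivity)
  have hr2 : r^2 = F / M := Real.sq_sqrt (by positivity)
  have hab : r * M^2 = M * F / r := by
    rw [eq_div_iff hrpos.ne']
    have : r * M^2 * r = r^2 * M^2 := by ring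
    rw [this, hr2]
    field_simp
  have h1 := key r hrpos
  rw [← hab] at h1
  have hE2 : E^2 ≤ 4 * (M^3 * F) := by
    have h2 : E ≤ 2 * (r * M^2) := by linarith
    have h3 : E^2 ≤ (2 * (r * M^2))^2 := by
      exact pow_le_pow_left₀ hE0 h2 2
    have h4 : (2 * (r * M^2))^2 = 4 * (r^2 * M^4) := by ring
    rw [h4, hr2] at h3
    have h5 : 4 * (F / M * M^4) = 4 * (M^3 * F) := by
      field_simp
    linarith [h3, h5.le, h5.ge]
  -- E^8 ≤ 16384 * E^3 * D^3 * F^4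
  have hsE : Real.sqrt E ^ 2 = E := Real.sq_sqrt hE0
  have hsD : Real.sqrt D ^ 2 = D := Real.sq_sqrt hD0
  have hE4 : E^4 ≤ 16 * (M^3 * F)^2 := by
    have := pow_le_pow_left₀ (sq_nonneg E) hE2 2
    calc E^4 = (E^2)^2 := by ring
      _ ≤ (4 * (M^3*F))^2 := this
      _ = 16 * (M^3*F)^2 := by ring
  have hM6 : (M^3)^2 = 8 * (Real.sqrt E)^3 * (Real.sqrt D)^3 := by
    have : (M^3)^2 = (M^2)^3 := by ring
    rw [this, hMsq]; ring
  have hE8 : E^8 ≤ 16384 * (E^3 * (D^3 * F^4)) := by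
    have h6 : E^4 ≤ 128 * ((Real.sqrt E)^3 * (Real.sqrt D)^3 * F^2) := by
      calc E^4 ≤ 16 * (M^3*F)^2 := hE4
        _ = 16 * (M^3)^2 * F^2 := by ring
        _ = 16 * (8 * (Real.sqrt E)^3 * (Real.sqrt D)^3) * F^2 := by rw [hM6]
        _ = 128 * ((Real.sqrt E)^3 * (Real.sqrt D)^3 * F^2) := by ring
    have h7 := pow_le_pow_left₀ (by positivity : (0:ℝ) ≤ E^4) h6 2
    calc E^8 = (E^4)^2 := by ring
      _ ≤ (128 * ((Real.sqrt E)^3 * (Real.sqrt D)^3 * F^2))^2 := h7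
      _ = 16384 * (((Real.sqrt E)^2)^3 * (((Real.sqrt D)^2)^3 * F^4)) := by ring
      _ = 16384 * (E^3 * (D^3 * F^4)) := by rw [hsE, hsD]
  have hE5 : E^5 ≤ 16384 * (D^3 * F^4) := by
    have hE3 : (0:ℝ) < E^3 := by positivity
    have : E^5 * E^3 ≤ (16384 * (D^3 * F^4)) * E^3 := by
      calc E^5 * E^3 = E^8 := by ring
        _ ≤ 16384 * (E^3 * (D^3*F^4)) := hE8
        _ = (16384 * (D^3*F^4)) * E^3 := by ring
    exact le_of_mul_le_mul_right this hE3
  -- conclude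
  have hRHS5 : (8 * D ^ ((3:ℝ)/5) * F ^ ((4:ℝ)/5))^5 = 32768 * (D^3 * F^4) := by
    have hd : (D ^ ((3:ℝ)/5))^(5:ℕ) = D^3 := by
      rw [← Real.rpow_natCast (D ^ ((3:ℝ)/5)) 5, ← Real.rpow_mul hD0, ← Real.rpow_natCast D 3]
      norm_num
    have hf : (F ^ ((4:ℝ)/5))^(5:ℕ) = F^4 := by
      rw [← Real.rpow_natCast (F ^ ((4:ℝ)/5)) 5, ← Real.rpow_mul hF0, ← Real.rpow_natCast F 4]
      norm_num
    calc (8 * D ^ ((3:ℝ)/5) * F ^ ((4:ℝ)/5))^5 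
        = 32768 * ((D ^ ((3:ℝ)/5))^(5:ℕ) * (F ^ ((4:ℝ)/5))^(5:ℕ)) := by ring
      _ = 32768 * (D^3 * F^4) := by rw [hd, hf]
  have hfinal : E^5 ≤ (8 * D ^ ((3:ℝ)/5) * F ^ ((4:ℝ)/5))^5 := by
    rw [hRHS5]
    nlinarith [hE5, mul_nonneg (pow_nonneg hD0 3) (pow_nonneg hF0 4)]
  exact le_of_pow_le_pow_left₀ (by norm_num) hRHSnn hfinal
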